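/- Each Hermite function φ_n is an eigenfunction of the unitary Fourier transform with eigenvalue (-i)^n: F[φ_n](ω) = (-i)^n φ_n(ω). -/

import Mathlib

open MeasureTheory

/-- Normalized Hermite functions: `φ_0(x) = π^{-1/4} e^{-x²/2}`,
`φ_{n+1} = (2(n+1))^{-1/2} (x φ_n - φ_n')`. -/
noncomputable def hermiteFun : ℕ → ℝ → ℝ
  | 0 => fun x => Real.pi ^ (-(1 : ℝ)/4) * Real.exp (-x ^ 2 / 2)
  | n + 1 => fun x =>
      (Real.sqrt (2 * (n + 1)))⁻¹ * (x * hermiteFun n x - deriv (hermiteFun n) x)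

/-- Unitary Fourier transform `F[f](ω) = (2π)^{-1/2} ∫ f(t) e^{-iωt} dt`. -/
noncomputable def fourierT (f : ℝ → ℂ) (ω : ℝ) : ℂ :=
  ((Real.sqrt (2 * Real.pi) : ℝ) : ℂ)⁻¹ *
    ∫ t : ℝ, f t * Complex.exp (-Complex.I * ω * t)

open Real FourierTransform

/-! ### Auxiliary lemmas -/

lemma gauss_hasDerivAt' (x : ℝ) :
    HasDerivAt (fun x : ℝ => Real.exp (-x ^ 2 / 2)) (-x * Real.exp (-x ^ 2 / 2)) x := by
  have h : HasDerivAt (fun x : ℝ => -x ^ 2 / 2) (-x) x := by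
    have := ((hasDerivAt_pow 2 x).neg).div_const 2
    simpa using this.congr_deriv (by push_cast; ring)
  simpa [mul_comm] using h.exp

lemma pg_hasDerivAt (p : Polynomial ℝ) (x : ℝ) :
    HasDerivAt (fun x : ℝ => p.eval x * Real.exp (-x ^ 2 / 2))
      ((p.derivative.eval x - x * p.eval x) * Real.exp (-x ^ 2 / 2)) x := by
  have := (p.hasDerivAt x).mul (gauss_hasDerivAt' x)
  convert! this using 1
  ring

lemma pow_gauss_integrable (k : ℕ) :
    Integrable (fun x : ℝ => x ^ k * Real.exp (-x ^ 2 / 2)) := by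
  have := integrable_rpow_mul_exp_neg_mul_sq (b := 1/2) (by norm_num) (s := k)
    (lt_of_lt_of_le (by norm_num) (Nat.cast_nonneg k))
  refine this.congr (Filter.Eventually.of_forall fun x => ?_)
  simp only [Real.rpow_natCast]
  ring_nf

lemma pg_integrable (p : Polynomial ℝ) :
    Integrable (fun x : ℝ => p.eval x * Real.exp (-x ^ 2 / 2)) := by
  have h : (fun x : ℝ => p.eval x * Real.exp (-x ^ 2 / 2))
      = fun x : ℝ => ∑ i ∈ Finset.range (p.natDegree + 1),
          p.coeff i * (x ^ i * Real.exp (-x ^ 2 / 2)) := by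
    funext x
    rw [Polynomial.eval_eq_sum_range, Finset.sum_mul]
    simp [mul_assoc]
  rw [h]
  exact integrable_finset_sum _ fun i _ => (pow_gauss_integrable i).const_mul _

lemma herm_rep (n : ℕ) : ∃ p : Polynomial ℝ,
    hermiteFun n = fun x => p.eval x * Real.exp (-x ^ 2 / 2) := by
  induction n with
  | zero =>
    exact ⟨Polynomial.C (Real.pi ^ (-(1 : ℝ)/4)), by funext x; simp [hermiteFun]⟩
  | succ n ih =>
    obtain ⟨p, hp⟩ := ih
    refine ⟨Polynomial.C (Real.sqrt (2 * (n + 1)))⁻¹ * (2 * Polynomial.X * p - p.derivative),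
      funext fun x => ?_⟩
    have hd : deriv (hermiteFun n) x
        = (p.derivative.eval x - x * p.eval x) * Real.exp (-x ^ 2 / 2) := by
      rw [hp]; exact (pg_hasDerivAt p x).deriv
    show (Real.sqrt (2 * (n + 1)))⁻¹ * (x * hermiteFun n x - deriv (hermiteFun n) x) = _
    rw [hd, hp]
    simp only [Polynomial.eval_mul, Polynomial.eval_C, Polynomial.eval_sub, Polynomial.eval_ofNat,
      Polynomial.eval_X]
    ring

/-! ### Relation to the Mathlib Fourier transform -/

lemma fourierT_eq_F (f : ℝ → ℂ) (ω : ℝ) :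
    fourierT f ω = ((Real.sqrt (2 * Real.pi) : ℝ) : ℂ)⁻¹ * 𝓕 f (ω / (2 * Real.pi)) := by
  unfold fourierT
  congr 1
  rw [Real.fourier_eq']
  congr 1 with t
  rw [smul_eq_mul, mul_comm]
  congr 1
  have hπ : (2 : ℝ) * Real.pi ≠ 0 := by positivity
  have : -2 * Real.pi * (ω / (2 * Real.pi) * t) = -(ω * t) := by
    field_simp
  simp only [RCLike.inner_apply, starRingEnd_apply, star_trivial]
  rw [this]
  push_cast
  ring_nf

lemma fourierT_deriv (f : ℝ → ℂ) (hf : Integrable f) (h'f : Differentiable ℝ f)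
    (hf' : Integrable (deriv f)) (ω : ℝ) :
    fourierT (deriv f) ω = Complex.I * ω * fourierT f ω := by
  rw [fourierT_eq_F, fourierT_eq_F, Real.fourier_deriv hf h'f hf']
  simp only [smul_eq_mul]
  have key : ((2:ℂ) * Real.pi * Complex.I * ((ω / (2*Real.pi) : ℝ) : ℂ)) = Complex.I * ω := by
    have hπ : (Real.pi : ℂ) ≠ 0 := by exact_mod_cast Real.pi_ne_zero
    push_cast
    field_simp
  rw [key]
  ring

lemma fourierT_hasDerivAt (f : ℝ → ℂ) (hf : Integrable f)
    (hxf : Integrable (fun x : ℝ => x • f x)) (ω : ℝ) :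
    HasDerivAt (fourierT f) (-Complex.I * fourierT (fun x => (x : ℂ) * f x) ω) ω := by
  have h := Real.hasDerivAt_fourier hf hxf (ω / (2 * Real.pi))
  have h2 : HasDerivAt (fun w : ℝ => w / (2 * Real.pi)) (1 / (2 * Real.pi)) ω := by
    simpa using (hasDerivAt_id ω).div_const (2 * Real.pi)
  have h3 := HasDerivAt.const_mul (((Real.sqrt (2 * Real.pi) : ℝ) : ℂ)⁻¹)
    (HasDerivAt.scomp ω h h2)
  simp only [Function.comp_def] at h3
  have hfe : (fun w : ℝ => ((Real.sqrt (2 * Real.pi) : ℝ) : ℂ)⁻¹ * 𝓕 f (w / (2 * Real.pi)))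
      = fourierT f := by
    funext w; rw [fourierT_eq_F]
  rw [hfe] at h3
  convert! h3 using 1
  rw [fourierT_eq_F]
  have hsmul : 𝓕 (fun x : ℝ => (-2 * Real.pi * Complex.I * x) • f x) (ω / (2 * Real.pi))
      = (-2 * Real.pi * Complex.I) • 𝓕 (fun x : ℝ => (x : ℂ) * f x) (ω / (2 * Real.pi)) := by
    rw [Real.fourier_eq, Real.fourier_eq, ← integral_smul]
    congr 1 with x
    simp only [Circle.smul_def, smul_eq_mul]
    ring
  rw [hsmul]
  have hπ : (Real.pi : ℂ) ≠ 0 := by exact_mod_cast Real.pi_ne_zero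
  simp only [smul_eq_mul, Complex.real_smul]
  have h4 : ((Real.sqrt 2 : ℝ) : ℂ) ≠ 0 := by
    simp [Real.sqrt_eq_zero']
  have h5 : ((Real.sqrt Real.pi : ℝ) : ℂ) ≠ 0 := by
    simp [Real.sqrt_eq_zero', Real.pi_pos.le, Real.pi_ne_zero]
  push_cast
  field_simp

lemma integrand_integrable (f : ℝ → ℂ) (hf : Integrable f) (ω : ℝ) :
    Integrable (fun t : ℝ => f t * Complex.exp (-Complex.I * ω * t)) := by
  refine hf.norm.mono' (hf.aestronglyMeasurable.mul ?_) (Filter.Eventually.of_forall fun t => ?_)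
  · exact (Complex.continuous_exp.comp (by continuity)).aestronglyMeasurable
  · rw [norm_mul]
    have : ‖Complex.exp (-Complex.I * ω * t)‖ = 1 := by
      rw [Complex.norm_exp]
      simp
    rw [this, mul_one]

/-! ### Base case -/

lemma herm_base (ω : ℝ) :
    fourierT (fun t => (hermiteFun 0 t : ℂ)) ω = (hermiteFun 0 ω : ℂ) := by
  unfold fourierT
  have h1 : ∀ t : ℝ, ((hermiteFun 0 t : ℝ) : ℂ) * Complex.exp (-Complex.I * ω * t)
      = ((Real.pi ^ (-(1:ℝ)/4) : ℝ) : ℂ) *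
        (Complex.exp (Complex.I * (-ω) * t) * Complex.exp (-(1/2 : ℂ) * t ^ 2)) := by
    intro t
    simp only [hermiteFun]
    push_cast
    rw [mul_assoc, ← Complex.exp_add, ← Complex.exp_add]
    congr 2
    ring
  simp only [h1]
  rw [integral_const_mul]
  rw [fourierIntegral_gaussian (by norm_num : (0:ℝ) < ((1/2 : ℂ)).re) (-ω)]
  have h2 : ((Real.pi : ℂ) / (1/2)) ^ (1/2 : ℂ) = ((Real.sqrt (2 * Real.pi) : ℝ) : ℂ) := by
    rw [Real.sqrt_eq_rpow, Complex.ofReal_cpow (by positivity)]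
    push_cast
    ring_nf
  have h3 : -(-(ω:ℂ)) ^ 2 / (4 * (1/2)) = ((-ω ^ 2 / 2 : ℝ) : ℂ) := by
    push_cast; ring
  rw [h2, h3, ← Complex.ofReal_exp]
  have h4 : ((Real.sqrt (2 * Real.pi) : ℝ) : ℂ) ≠ 0 := by
    simp [Real.sqrt_eq_zero']
    positivity
  simp only [hermiteFun]
  have h5 : ((Real.sqrt 2 : ℝ) : ℂ) ≠ 0 := by simp [Real.sqrt_eq_zero']
  have h6 : ((Real.sqrt Real.pi : ℝ) : ℂ) ≠ 0 := by
    simp [Real.sqrt_eq_zero', Real.pi_pos.le, Real.pi_ne_zero]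
  push_cast
  field_simp

/-- Each Hermite function is an eigenfunction of the unitary Fourier
transform with eigenvalue `(-i)^n`. -/
theorem stmt_1 (n : ℕ) (ω : ℝ) :
    fourierT (fun t => (hermiteFun n t : ℂ)) ω
      = (-Complex.I) ^ n * (hermiteFun n ω : ℂ) := by
  induction n generalizing ω with
  | zero => simpa using herm_base ω
  | succ n ih =>
    obtain ⟨p, hp⟩ := herm_rep n
    -- facts about the real Hermite function
    have hDg : ∀ x : ℝ, HasDerivAt (hermiteFun n)
        ((p.derivative.eval x - x * p.eval x) * Real.exp (-x ^ 2 / 2)) x := by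
      intro x; rw [hp]; exact pg_hasDerivAt p x
    have hdiffg : Differentiable ℝ (hermiteFun n) := fun x => (hDg x).differentiableAt
    have hderivfun : deriv (hermiteFun n)
        = fun x => (p.derivative - Polynomial.X * p).eval x * Real.exp (-x ^ 2 / 2) := by
      funext x
      rw [(hDg x).deriv]
      simp only [Polynomial.eval_sub, Polynomial.eval_mul, Polynomial.eval_X]
    have hint : Integrable (hermiteFun n) := by rw [hp]; exact pg_integrable p
    have hint' : Integrable (deriv (hermiteFun n)) := by
      rw [hderivfun]; exact pg_integrable _
    have hintx : Integrable (fun x : ℝ => x * hermiteFun n x) := by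
      refine (pg_integrable (Polynomial.X * p)).congr
        (Filter.Eventually.of_forall fun x => ?_)
      rw [hp]
      simp only [Polynomial.eval_mul, Polynomial.eval_X]
      ring
    -- complexified function
    set f : ℝ → ℂ := fun t => ((hermiteFun n t : ℝ) : ℂ) with hf_def
    have hfc : Integrable f := hint.ofReal
    have hDf : ∀ x : ℝ, HasDerivAt f ((deriv (hermiteFun n) x : ℝ) : ℂ) x :=
      fun x => ((hdiffg x).hasDerivAt).ofReal_comp
    have hdf : Differentiable ℝ f := fun x => (hDf x).differentiableAt
    have hderivf_eq : deriv f = fun x => ((deriv (hermiteFun n) x : ℝ) : ℂ) :=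
      funext fun x => (hDf x).deriv
    have hf'c : Integrable (deriv f) := by rw [hderivf_eq]; exact hint'.ofReal
    have hxfc : Integrable (fun x : ℝ => x • f x) := by
      refine hintx.ofReal.congr (Filter.Eventually.of_forall fun x => ?_)
      simp [hf_def, Complex.real_smul]
    have hxfc' : Integrable (fun x : ℝ => (x : ℂ) * f x) := by
      refine hxfc.congr (Filter.Eventually.of_forall fun x => ?_)
      simp [Complex.real_smul]
    -- Step C : Fourier transform of x·f
    have hFf : fourierT f = fun w : ℝ => (-Complex.I) ^ n * ((hermiteFun n w : ℝ) : ℂ) :=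
      funext fun w => ih w
    have hC : fourierT (fun x => (x : ℂ) * f x) ω
        = Complex.I * ((-Complex.I) ^ n * ((deriv (hermiteFun n) ω : ℝ) : ℂ)) := by
      have h1 := fourierT_hasDerivAt f hfc hxfc ω
      have h2 : HasDerivAt (fourierT f)
          ((-Complex.I) ^ n * ((deriv (hermiteFun n) ω : ℝ) : ℂ)) ω := by
        rw [hFf]
        exact HasDerivAt.const_mul _ ((hdiffg ω).hasDerivAt.ofReal_comp)
      have h3 := h1.unique h2
      rw [← h3, ← mul_assoc, mul_neg, Complex.I_mul_I, neg_neg, one_mul]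
    -- Step B : Fourier transform of f'
    have hB : fourierT (deriv f) ω
        = Complex.I * ω * ((-Complex.I) ^ n * ((hermiteFun n ω : ℝ) : ℂ)) := by
      rw [fourierT_deriv f hfc hdf hf'c, ih ω]
    -- Step A : linearity
    have hA : fourierT (fun t => ((hermiteFun (n+1) t : ℝ) : ℂ)) ω
        = (((Real.sqrt (2 * (n + 1)) : ℝ))⁻¹ : ℂ) *
          (fourierT (fun t => (t : ℂ) * f t) ω - fourierT (deriv f) ω) := by
      unfold fourierT
      have hint_eq : ∀ t : ℝ, ((hermiteFun (n+1) t : ℝ) : ℂ) * Complex.exp (-Complex.I * ω * t)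
          = (((Real.sqrt (2 * (n + 1)) : ℝ))⁻¹ : ℂ) *
            (((t : ℂ) * f t) * Complex.exp (-Complex.I * ω * t)
              - (deriv f t) * Complex.exp (-Complex.I * ω * t)) := by
        intro t
        have : hermiteFun (n+1) t
            = (Real.sqrt (2 * (n + 1)))⁻¹ * (t * hermiteFun n t - deriv (hermiteFun n) t) := rfl
        rw [this, hderivf_eq]
        push_cast
        ring
      simp only [hint_eq]
      rw [integral_const_mul, integral_sub (integrand_integrable _ hxfc' ω)
        (integrand_integrable _ hf'c ω)]
      ring
    rw [hA, hB, hC]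
    have hrhs : ((hermiteFun (n+1) ω : ℝ) : ℂ)
        = (((Real.sqrt (2 * (n + 1)) : ℝ))⁻¹ : ℂ) *
          ((ω : ℂ) * ((hermiteFun n ω : ℝ) : ℂ) - ((deriv (hermiteFun n) ω : ℝ) : ℂ)) := by
      have : hermiteFun (n+1) ω
          = (Real.sqrt (2 * (n + 1)))⁻¹ * (ω * hermiteFun n ω - deriv (hermiteFun n) ω) := rfl
      rw [this]
      push_cast
      ring
    rw [hrhs, pow_succ]
    ring
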